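/- The number of parameters in the linear H^2 neural network satisfies N_p^{H^2} = 2^L m^2 (2 n_b^{(ad)} + 1) + N r + 2 Σ_{ℓ=2}^{L-1} 2^{ℓ+1} r^2 + Σ_{ℓ=2}^{L} 2^ℓ r^2 (2 n_b^{(ℓ)} + 1) + 2^L r m ≤ 3 N m (2 n_b + 3), where n_b = max(n_b^{(ad)}, max_ℓ n_b^{(ℓ)}), under the assumptions r ≤ m and N = 2^L m. -/

import Mathlib

open Finset

lemma sum_range_two_pow (n : ℕ) : ∑ i ∈ Finset.range n, 2 ^ i = 2 ^ n - 1 := by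
  induction n with
  | zero => simp
  | succ n ih =>
    rw [Finset.sum_range_succ, ih]
    have := Nat.one_le_two_pow (n := n)
    omega

lemma sum_icc_two_pow_le (L : ℕ) : ∑ ℓ ∈ Finset.Icc 2 L, 2 ^ ℓ ≤ 2 ^ (L + 1) := by
  have h : Finset.Icc 2 L ⊆ Finset.range (L + 1) := by
    intro x hx
    simp only [Finset.mem_Icc] at hx
    simp only [Finset.mem_range]
    omega
  calc ∑ ℓ ∈ Finset.Icc 2 L, 2 ^ ℓ ≤ ∑ ℓ ∈ Finset.range (L + 1), 2 ^ ℓ :=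
        Finset.sum_le_sum_of_subset h
    _ = 2 ^ (L + 1) - 1 := sum_range_two_pow _
    _ ≤ 2 ^ (L + 1) := Nat.sub_le _ _

/-- the parameter count of the linear H^2 neural network is bounded
by `3 N m (2 n_b + 3)`, where `n_b` is the maximum of all band sizes. -/
theorem h2_linear_param_count (L m r N : ℕ) (hL : 2 ≤ L) (hm : 1 ≤ m) (hr : 1 ≤ r)
    (hrm : r ≤ m) (hN : N = 2 ^ L * m)
    (nbad : ℕ) (hnbad : 1 ≤ nbad) (nbl : ℕ → ℕ) (hnbl : ∀ ℓ ∈ Icc 2 L, 1 ≤ nbl ℓ)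
    (nb : ℕ) (hnb : nb = max nbad ((Icc 2 L).sup nbl)) :
    2 ^ L * m ^ 2 * (2 * nbad + 1) + N * r + 2 * (∑ ℓ ∈ Icc 2 (L - 1), 2 ^ (ℓ + 1) * r ^ 2)
      + (∑ ℓ ∈ Icc 2 L, 2 ^ ℓ * r ^ 2 * (2 * nbl ℓ + 1)) + 2 ^ L * r * m
      ≤ 3 * N * m * (2 * nb + 3) := by
  subst hN
  have hb1 : nbad ≤ nb := hnb ▸ le_max_left _ _
  have hrr : r ^ 2 ≤ m ^ 2 := Nat.pow_le_pow_left hrm 2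
  -- bound for the first sum
  have h3 : ∑ ℓ ∈ Icc 2 (L - 1), 2 ^ (ℓ + 1) * r ^ 2 ≤ 2 ^ (L + 1) * r ^ 2 := by
    have : ∑ ℓ ∈ Icc 2 (L - 1), 2 ^ (ℓ + 1) * r ^ 2
        = (∑ ℓ ∈ Icc 2 (L - 1), 2 ^ ℓ) * (2 * r ^ 2) := by
      rw [Finset.sum_mul]
      exact Finset.sum_congr rfl fun ℓ _ => by ring
    rw [this]
    have h4 := sum_icc_two_pow_le (L - 1)
    have hL1 : L - 1 + 1 = L := by omega
    rw [hL1] at h4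
    calc (∑ ℓ ∈ Icc 2 (L - 1), 2 ^ ℓ) * (2 * r ^ 2) ≤ 2 ^ L * (2 * r ^ 2) :=
          Nat.mul_le_mul_right _ h4
      _ = 2 ^ (L + 1) * r ^ 2 := by ring
  -- bound for the second sum
  have h5 : ∑ ℓ ∈ Icc 2 L, 2 ^ ℓ * r ^ 2 * (2 * nbl ℓ + 1)
      ≤ 2 ^ (L + 1) * (r ^ 2 * (2 * nb + 1)) := by
    calc ∑ ℓ ∈ Icc 2 L, 2 ^ ℓ * r ^ 2 * (2 * nbl ℓ + 1)
        ≤ ∑ ℓ ∈ Icc 2 L, 2 ^ ℓ * (r ^ 2 * (2 * nb + 1)) := by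
          refine Finset.sum_le_sum fun ℓ hℓ => ?_
          have hℓb : nbl ℓ ≤ nb := hnb ▸ le_trans (Finset.le_sup hℓ) (le_max_right _ _)
          calc 2 ^ ℓ * r ^ 2 * (2 * nbl ℓ + 1) ≤ 2 ^ ℓ * r ^ 2 * (2 * nb + 1) := by
                exact Nat.mul_le_mul_left _ (by omega)
            _ = 2 ^ ℓ * (r ^ 2 * (2 * nb + 1)) := by ring
      _ = (∑ ℓ ∈ Icc 2 L, 2 ^ ℓ) * (r ^ 2 * (2 * nb + 1)) := by rw [Finset.sum_mul]
      _ ≤ 2 ^ (L + 1) * (r ^ 2 * (2 * nb + 1)) :=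
          Nat.mul_le_mul_right _ (sum_icc_two_pow_le L)
  have hA : (0:ℕ) < 2 ^ L := Nat.pow_pos (by norm_num)
  have key : 2 ^ L * m ^ 2 * (2 * nbad + 1) + 2 ^ L * m * r
      + 2 * (2 ^ (L + 1) * r ^ 2) + 2 ^ (L + 1) * (r ^ 2 * (2 * nb + 1)) + 2 ^ L * r * m
      ≤ 3 * (2 ^ L * m) * m * (2 * nb + 3) := by
    have h1 : 2 ^ L * m ^ 2 * (2 * nbad + 1) ≤ 2 ^ L * m ^ 2 * (2 * nb + 1) :=
      Nat.mul_le_mul_left _ (by omega)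
    have h2 : 2 ^ L * m * r ≤ 2 ^ L * m ^ 2 := by
      calc 2 ^ L * m * r ≤ 2 ^ L * m * m := Nat.mul_le_mul_left _ hrm
        _ = 2 ^ L * m ^ 2 := by ring
    have h2' : 2 ^ L * r * m ≤ 2 ^ L * m ^ 2 := by
      calc 2 ^ L * r * m ≤ 2 ^ L * m * m := by
            exact Nat.mul_le_mul_right _ (Nat.mul_le_mul_left _ hrm)
        _ = 2 ^ L * m ^ 2 := by ring
    have h3' : 2 * (2 ^ (L + 1) * r ^ 2) ≤ 4 * (2 ^ L * m ^ 2) := by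
      have : 2 ^ (L + 1) * r ^ 2 ≤ 2 ^ (L + 1) * m ^ 2 := Nat.mul_le_mul_left _ hrr
      calc 2 * (2 ^ (L + 1) * r ^ 2) ≤ 2 * (2 ^ (L + 1) * m ^ 2) := Nat.mul_le_mul_left _ this
        _ = 4 * (2 ^ L * m ^ 2) := by ring
    have h4' : 2 ^ (L + 1) * (r ^ 2 * (2 * nb + 1)) ≤ 2 * (2 ^ L * m ^ 2 * (2 * nb + 1)) := by
      calc 2 ^ (L + 1) * (r ^ 2 * (2 * nb + 1)) ≤ 2 ^ (L + 1) * (m ^ 2 * (2 * nb + 1)) :=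
            Nat.mul_le_mul_left _ (Nat.mul_le_mul_right _ hrr)
        _ = 2 * (2 ^ L * m ^ 2 * (2 * nb + 1)) := by ring
    have hfin : 2 ^ L * m ^ 2 * (2 * nb + 1) + 2 ^ L * m ^ 2 + 4 * (2 ^ L * m ^ 2)
        + 2 * (2 ^ L * m ^ 2 * (2 * nb + 1)) + 2 ^ L * m ^ 2
        = 3 * (2 ^ L * m) * m * (2 * nb + 3) := by ring
    omega
  omega
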